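/- Let v ≥ 2, c ≥ 1, and ñ ≥ c be integers with c dividing ñ, and set n = vñ. Let H^S = (1_v 1_v^T) ⊗ (−(c/(vñ))B) + I_n, where ⊗ is the Kronecker product. Then H^S has eigenvalue 0 with multiplicity c and eigenvalue 1 with multiplicity n−c; in particular H^S is positive semi-definite, ‖H^S‖ = 1, and for every real n×n matrix K the matrix K^T H^S K is positive semi-definite. -/

import Mathlib

open Matrix Kronecker

/-- The spectral (operator) norm of a real square matrix. -/
noncomputable def specNorm {I : Type*} [Fintype I] [DecidableEq I]
    (A : Matrix I I ℝ) : ℝ :=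
  ‖Matrix.toEuclideanCLM (𝕜 := ℝ) A‖

/-- The `nt × nt` block-diagonal matrix with `c` all-ones diagonal blocks of size `nt/c`. -/
def blockOnes (nt c : ℕ) : Matrix (Fin nt) (Fin nt) ℝ :=
  Matrix.of fun s t => if (s : ℕ) / (nt / c) = (t : ℕ) / (nt / c) then 1 else 0

/-- The `v × v` all-ones matrix. -/
def allOnes (v : ℕ) : Matrix (Fin v) (Fin v) ℝ :=
  Matrix.of fun _ _ => 1

section Aux

open Polynomial

lemma myCharpoly_conj {n R : Type*} [CommRing R] [Fintype n] [DecidableEq n]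
    (U D W : Matrix n n R) (h : U * W = 1) :
    (U * D * W).charpoly = D.charpoly := by
  let f : Matrix n n R →+* Matrix n n R[X] := RingHom.mapMatrix (m := n) (C : R →+* R[X])
  have hsc : ∀ A : Matrix n n R[X], A * Matrix.scalar n (X : R[X]) = Matrix.scalar n X * A := by
    intro A
    exact (Matrix.scalar_commute (X : R[X]) (fun r' => Commute.all _ _) A).symm
  have hcm : charmatrix (U * D * W) = f U * charmatrix D * f W := by
    have h1 : f U * f W = 1 := by rw [← _root_.map_mul f, h, _root_.map_one f]
    unfold charmatrix
    show Matrix.scalar n X - f (U * D * W) =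
      f U * (Matrix.scalar n X - f D) * f W
    rw [mul_sub, sub_mul, ← _root_.map_mul f, ← _root_.map_mul f]
    congr 1
    · have h2 : f U * Matrix.scalar n (X : R[X]) * f W = Matrix.scalar n X := by
        rw [hsc (f U), mul_assoc, h1, mul_one]
      exact h2.symm
  rw [Matrix.charpoly, hcm, det_mul, det_mul, Matrix.charpoly, mul_comm (det (f U)),
    mul_assoc, ← det_mul, ← _root_.map_mul f, h, _root_.map_one f, det_one, mul_one]

lemma myCharpoly_diagonal {n R : Type*} [CommRing R] [Fintype n] [DecidableEq n]
    (d : n → R) : (Matrix.diagonal d).charpoly = ∏ i, (X - C (d i)) := by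
  have : charmatrix (Matrix.diagonal d) = Matrix.diagonal fun i => (X : R[X]) - C (d i) := by
    ext i j
    rcases eq_or_ne i j with rfl | hij
    · simp
    · simp [charmatrix_apply_ne _ _ _ hij, Matrix.diagonal_apply_ne _ hij,
        Matrix.diagonal_apply_ne d hij]
  rw [Matrix.charpoly, this, det_diagonal]

lemma aux_card {nt : ℕ} (m : ℕ) (hm : 0 < m) (k : ℕ) (hk : (k+1) * m ≤ nt) :
    (Finset.univ.filter (fun u : Fin nt => (u : ℕ) / m = k)).card = m := by
  have hemb : ∀ j : Fin m, (j : ℕ) + m * k < nt := fun j => by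
    calc (j : ℕ) + m * k < m + m * k := by omega
    _ = (k + 1) * m := by ring
    _ ≤ nt := hk
  have : (Finset.univ.filter (fun u : Fin nt => (u : ℕ) / m = k)) =
      Finset.univ.map ⟨fun j : Fin m => (⟨(j : ℕ) + m * k, hemb j⟩ : Fin nt),
        by intro a b hab; simp only [Fin.mk.injEq] at hab; exact Fin.ext (by omega)⟩ := by
    ext u
    simp only [Finset.mem_filter, Finset.mem_univ, true_and, Finset.mem_map,
      Function.Embedding.coeFn_mk]
    constructor
    · intro h
      refine ⟨⟨(u : ℕ) % m, Nat.mod_lt _ hm⟩, Fin.ext ?_⟩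
      show (u : ℕ) % m + m * k = u
      rw [← h]
      exact (Nat.mod_add_div (u : ℕ) m)
    · rintro ⟨j, rfl⟩
      show ((j : ℕ) + m * k) / m = k
      rw [Nat.add_mul_div_left _ _ hm, Nat.div_eq_of_lt j.2, zero_add]
  rw [this, Finset.card_map, Finset.card_univ, Fintype.card_fin]

lemma blockOnes_mul {c m : ℕ} (hc : 0 < c) (hm : 0 < m) :
    blockOnes (c * m) c * blockOnes (c * m) c = (m : ℝ) • blockOnes (c * m) c := by
  have hq : c * m / c = m := Nat.mul_div_cancel_left m hc
  ext s t
  simp only [blockOnes, mul_apply, of_apply, Matrix.smul_apply, smul_eq_mul, hq,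
    ite_mul, one_mul, zero_mul]
  simp only [← ite_and]
  rw [Finset.sum_boole]
  by_cases h : (s : ℕ) / m = (t : ℕ) / m
  · have : (Finset.univ.filter fun u : Fin (c * m) =>
        (s : ℕ) / m = (u : ℕ) / m ∧ (u : ℕ) / m = (t : ℕ) / m) =
        Finset.univ.filter fun u : Fin (c * m) => (u : ℕ) / m = (s : ℕ) / m := by
      ext u; simp only [Finset.mem_filter, Finset.mem_univ, true_and]
      constructor
      · rintro ⟨h1, _⟩; exact h1.symm
      · intro h1; exact ⟨h1.symm, h1.trans h⟩
    rw [this, aux_card m hm ((s : ℕ) / m)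
        (by
          have hs : (s : ℕ) < c * m := s.2
          have hlt : (s : ℕ) / m < c := Nat.div_lt_of_lt_mul (lt_of_lt_of_eq hs (Nat.mul_comm c m))
          exact Nat.mul_le_mul_right m hlt)]
    simp [h]
  · have : (Finset.univ.filter fun u : Fin (c * m) =>
        (s : ℕ) / m = (u : ℕ) / m ∧ (u : ℕ) / m = (t : ℕ) / m) = ∅ := by
      ext u; simp only [Finset.mem_filter, Finset.mem_univ, true_and, Finset.notMem_empty,
        iff_false]
      rintro ⟨h1, h2⟩; exact h (h1.trans h2)
    rw [this]
    simp [h]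

lemma allOnes_mul (v : ℕ) : allOnes v * allOnes v = (v : ℝ) • allOnes v := by
  ext i j
  simp [allOnes, mul_apply]

end Aux

/-- `H^S = (1_v 1_vᵀ) ⊗ (−(c/(v·ñ))·B) + I_n` (with `n = v·ñ`) has
eigenvalue `0` with multiplicity `c` and eigenvalue `1` with multiplicity `n − c`;
in particular `H^S` is positive semi-definite, `‖H^S‖ = 1`, and `Kᵀ H^S K` is positive
semi-definite for every real `n × n` matrix `K`. -/
theorem stmt4 (v c nt : ℕ) (hv : 2 ≤ v) (hc : 1 ≤ c) (hnc : c ≤ nt) (hdvd : c ∣ nt) :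
    let HS : Matrix (Fin v × Fin nt) (Fin v × Fin nt) ℝ :=
      allOnes v ⊗ₖ (-(((c : ℝ) / ((v : ℝ) * nt)) • blockOnes nt c)) + 1
    Polynomial.rootMultiplicity 0 HS.charpoly = c ∧
    Polynomial.rootMultiplicity 1 HS.charpoly = v * nt - c ∧
    HS.PosSemidef ∧
    specNorm HS = 1 ∧
    ∀ K : Matrix (Fin v × Fin nt) (Fin v × Fin nt) ℝ, (Kᵀ * HS * K).PosSemidef := by
  obtain ⟨m, rfl⟩ := hdvd
  intro HS
  have hc0 : 0 < c := hc
  have hv0 : 0 < v := by omega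
  have hm0 : 0 < m := by
    rcases Nat.eq_zero_or_pos m with hm | hm
    · subst hm; simp at hnc; omega
    · exact hm
  have hnt0 : 0 < c * m := Nat.mul_pos hc0 hm0
  -- real number facts
  have hvR : (v : ℝ) ≠ 0 := Nat.cast_ne_zero.mpr hv0.ne'
  have hcR : (c : ℝ) ≠ 0 := Nat.cast_ne_zero.mpr hc0.ne'
  have hmR : (m : ℝ) ≠ 0 := Nat.cast_ne_zero.mpr hm0.ne'
  set r : ℝ := (c : ℝ) / ((v : ℝ) * ((c * m : ℕ) : ℝ)) with hr
  set P : Matrix (Fin v × Fin (c * m)) (Fin v × Fin (c * m)) ℝ :=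
    r • (allOnes v ⊗ₖ blockOnes (c * m) c) with hPdef
  have hHS : HS = 1 - P := by
    ext ⟨i, s⟩ ⟨j, t⟩
    simp only [HS, P, Matrix.add_apply, Matrix.sub_apply, kroneckerMap_apply, allOnes, of_apply, Matrix.neg_apply,
      Matrix.smul_apply, smul_eq_mul, one_mul]
    ring
  have hMM : (allOnes v ⊗ₖ blockOnes (c * m) c) * (allOnes v ⊗ₖ blockOnes (c * m) c)
      = ((v : ℝ) * (m : ℝ)) • (allOnes v ⊗ₖ blockOnes (c * m) c) := by
    rw [← mul_kronecker_mul, allOnes_mul, blockOnes_mul hc0 hm0, smul_kronecker, kronecker_smul,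
      smul_smul]
  have hr1 : r * ((v : ℝ) * (m : ℝ)) = 1 := by
    rw [hr]
    push_cast
    field_simp
    try ring
  have hPP : P * P = P := by
    rw [hPdef, smul_mul_assoc, mul_smul_comm, hMM, smul_smul, smul_smul, mul_assoc, hr1, mul_one]
  have hidem : HS * HS = HS := by
    rw [hHS]
    have : (1 - P) * (1 - P) = 1 - P - P + P * P := by noncomm_ring
    rw [this, hPP]
    abel
  have hherm : HS.IsHermitian := by
    show HSᴴ = HS
    rw [hHS]
    have hPt : Pᴴ = P := by
      ext ⟨i, s⟩ ⟨j, t⟩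
      simp only [P, conjTranspose_apply, Matrix.smul_apply, kroneckerMap_apply, allOnes, blockOnes,
        of_apply, smul_eq_mul, star_trivial, one_mul]
      congr 1
      exact if_congr eq_comm rfl rfl
    rw [conjTranspose_sub, hPt, conjTranspose_one]
  -- trace
  have htraceB : (blockOnes (c * m) c).trace = ((c * m : ℕ) : ℝ) := by
    simp [Matrix.trace, Matrix.diag, blockOnes]
  have htraceJ : (allOnes v).trace = (v : ℝ) := by
    simp [Matrix.trace, Matrix.diag, allOnes]
  have htraceP : P.trace = (c : ℝ) := by
    rw [hPdef, trace_smul, trace_kronecker, htraceB, htraceJ, smul_eq_mul, hr]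
    push_cast
    field_simp
    try ring
  have hcardN : Fintype.card (Fin v × Fin (c * m)) = v * (c * m) := by simp
  have htrace : HS.trace = ((v * (c * m) : ℕ) : ℝ) - (c : ℝ) := by
    rw [hHS, trace_sub, htraceP, trace_one, hcardN]
    try push_cast
    try ring_nf
  -- spectral theorem
  set μ : Fin v × Fin (c * m) → ℝ := hherm.eigenvalues with hμ
  have hofReal : (RCLike.ofReal ∘ μ : Fin v × Fin (c * m) → ℝ) = μ := rfl
  have hU1 : (hherm.eigenvectorUnitary : Matrix (Fin v × Fin (c * m)) (Fin v × Fin (c * m)) ℝ) *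
      star (hherm.eigenvectorUnitary : Matrix (Fin v × Fin (c * m)) (Fin v × Fin (c * m)) ℝ)
      = 1 := (Matrix.mem_unitaryGroup_iff).mp hherm.eigenvectorUnitary.2
  have hU1' : star (hherm.eigenvectorUnitary : Matrix (Fin v × Fin (c * m)) (Fin v × Fin (c * m)) ℝ) *
      (hherm.eigenvectorUnitary : Matrix (Fin v × Fin (c * m)) (Fin v × Fin (c * m)) ℝ)
      = 1 := (Matrix.mem_unitaryGroup_iff').mp hherm.eigenvectorUnitary.2
  have hspec := hherm.spectral_theorem
  rw [hofReal, Unitary.conjStarAlgAut_apply] at hspec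
  have hchar : HS.charpoly = ∏ i, (Polynomial.X - Polynomial.C (μ i)) := by
    conv_lhs => rw [hspec]
    rw [myCharpoly_conj _ _ _ hU1, myCharpoly_diagonal]
  have htrsum : ∑ i, μ i = HS.trace := by
    conv_rhs => rw [hspec]
    rw [Matrix.trace_mul_comm, ← mul_assoc, hU1', one_mul, trace_diagonal]
  -- dichotomy of eigenvalues
  have hdich : ∀ i, μ i = 0 ∨ μ i = 1 := by
    intro i
    set b := ⇑(hherm.eigenvectorBasis i) with hb
    have h1 : HS *ᵥ b = μ i • b := hherm.mulVec_eigenvectorBasis i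
    have hb0 : b ≠ 0 := by
      intro hz
      have hzero : hherm.eigenvectorBasis i = 0 := by
        ext j
        exact congrFun hz j
      have hnorm := hherm.eigenvectorBasis.orthonormal.1 i
      rw [hzero] at hnorm
      simp at hnorm
    have h2 : HS *ᵥ (HS *ᵥ b) = (μ i * μ i) • b := by
      rw [h1, mulVec_smul, h1, smul_smul]
    have h3 : HS *ᵥ (HS *ᵥ b) = μ i • b := by
      rw [mulVec_mulVec, hidem, h1]
    have h4 : (μ i * μ i - μ i) • b = 0 := by
      rw [sub_smul, ← h2, h3, sub_self]
    rcases smul_eq_zero.mp h4 with h5 | h5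
    · have h6 : μ i * (μ i - 1) = 0 := by ring_nf; linarith [h5]
      rcases mul_eq_zero.mp h6 with h7 | h7
      · exact Or.inl h7
      · exact Or.inr (by linarith)
    · exact absurd h5 hb0
  -- counting
  set N : ℕ := v * (c * m) with hN
  have hcN : c < N := by
    calc c ≤ c * m := Nat.le_mul_of_pos_right c hm0
    _ = 1 * (c * m) := (one_mul _).symm
    _ < v * (c * m) := (Nat.mul_lt_mul_right hnt0).mpr (by omega)
  set bcard : ℕ := (Finset.univ.filter (fun i : Fin v × Fin (c * m) => μ i = 1)).card with hbcard
  have hbR : (bcard : ℝ) = (N : ℝ) - (c : ℝ) := by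
    have hsplit := Finset.sum_filter_add_sum_filter_not Finset.univ
      (fun i : Fin v × Fin (c * m) => μ i = 1) μ
    have h1 : ∑ i ∈ Finset.univ.filter (fun i : Fin v × Fin (c * m) => μ i = 1), μ i
        = (bcard : ℝ) := by
      rw [Finset.sum_congr rfl (fun i hi => (Finset.mem_filter.mp hi).2), Finset.sum_const,
        nsmul_eq_mul, mul_one]
    have h2 : ∑ i ∈ Finset.univ.filter (fun i : Fin v × Fin (c * m) => ¬ μ i = 1), μ i = 0 := by
      apply Finset.sum_eq_zero
      intro i hi
      rcases hdich i with h | h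
      · exact h
      · exact absurd h (Finset.mem_filter.mp hi).2
    rw [h1, h2, add_zero] at hsplit
    rw [hsplit, htrsum, htrace]
  have hbnat : bcard = N - c := by
    have : (bcard : ℝ) = ((N - c : ℕ) : ℝ) := by
      rw [Nat.cast_sub hcN.le]; exact hbR
    exact_mod_cast this
  have hacard : (Finset.univ.filter (fun i : Fin v × Fin (c * m) => μ i = 0)).card = c := by
    have hcompl : Finset.univ.filter (fun i : Fin v × Fin (c * m) => μ i = 0)
        = Finset.univ.filter (fun i : Fin v × Fin (c * m) => ¬ μ i = 1) := by
      ext i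
      simp only [Finset.mem_filter, Finset.mem_univ, true_and]
      constructor
      · intro h h1; rw [h1] at h; norm_num at h
      · intro h; rcases hdich i with h2 | h2
        · exact h2
        · exact absurd h2 h
    have hadd := Finset.card_filter_add_card_filter_not (s := Finset.univ)
      (p := fun i : Fin v × Fin (c * m) => μ i = 1)
    rw [Finset.card_univ, hcardN] at hadd
    rw [hcompl]
    omega
  -- root multiplicities
  have hroots : HS.charpoly.roots = Finset.univ.val.map μ := by
    rw [hchar]
    have : ∏ i, (Polynomial.X - Polynomial.C (μ i))
        = ((Finset.univ.val.map μ).map (fun a : ℝ => Polynomial.X - Polynomial.C a)).prod := by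
      rw [Multiset.map_map]
      rfl
    rw [this, Polynomial.roots_multiset_prod_X_sub_C]
  have hmult : ∀ x : ℝ, Polynomial.rootMultiplicity x HS.charpoly
      = (Finset.univ.filter (fun i : Fin v × Fin (c * m) => μ i = x)).card := by
    intro x
    rw [← Polynomial.count_roots, hroots, Multiset.count_map]
    congr 1
    ext i
    simp [eq_comm]
  constructor
  · rw [hmult 0, hacard]
  constructor
  · rw [hmult 1, ← hbcard, hbnat]
  have hpsd : HS.PosSemidef := by
    have hconj : HSᴴ * HS = HS := by rw [hherm, hidem]
    rw [← hconj]
    exact posSemidef_conjTranspose_mul_self HS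
  refine ⟨hpsd, ?_, ?_⟩
  · -- spectral norm
    set T := Matrix.toEuclideanCLM (𝕜 := ℝ) HS with hT
    have hTmul : T * T = T := by rw [hT, ← _root_.map_mul, hidem]
    have hTstar : star T = T := by
      have hstarHS : star HS = HS := by
        rw [Matrix.star_eq_conjTranspose]; exact hherm
      rw [hT, ← map_star, hstarHS]
    have hHSne : HS ≠ 0 := by
      intro h0
      rw [h0] at htrace
      simp only [trace_zero] at htrace
      have hlt : (c : ℝ) < (N : ℝ) := by exact_mod_cast hcN
      linarith
    have hTne : T ≠ 0 := by
      intro h0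
      apply hHSne
      have hinj : Function.Injective
          (Matrix.toEuclideanCLM (𝕜 := ℝ) (n := Fin v × Fin (c * m))) :=
        (Matrix.toEuclideanCLM (𝕜 := ℝ) (n := Fin v × Fin (c * m))).injective
      apply hinj
      rw [← hT, h0]
      exact (map_zero _).symm
    have hnorm : ‖T‖ * ‖T‖ = ‖T‖ := by
      calc ‖T‖ * ‖T‖ = ‖star T * T‖ := (CStarRing.norm_star_mul_self).symm
      _ = ‖T‖ := by rw [hTstar, hTmul]
    have hTn0 : ‖T‖ ≠ 0 := fun h => hTne (norm_eq_zero.mp h)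
    exact mul_right_cancel₀ hTn0 (hnorm.trans (one_mul ‖T‖).symm)
  · intro K
    have hKH : Kᴴ = Kᵀ := by
      ext i j
      simp [conjTranspose_apply]
    have h5 : HS * (HS * K) = HS * K := by rw [← mul_assoc, hidem]
    have heq : Kᵀ * HS * K = (HS * K)ᴴ * (HS * K) := by
      rw [conjTranspose_mul, hherm, hKH, mul_assoc, mul_assoc Kᵀ HS (HS * K), h5]
    rw [heq]
    exact posSemidef_conjTranspose_mul_self _
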